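/- arXiv:1205.1132 — 3 statements merged into one kernel-verified Lean document; each statement's English description precedes it below -/
import Mathlib

section
/- For a symmetric n×n real matrix A with S₂(A) = 0, the Newton tensor G(A) = S₁(A)·I − A is positive definite or negative definite if and only if S₃(A) ≠ 0. -/
open Finset

noncomputable def esym2 {n : ℕ} (l : Fin n → ℝ) : ℝ :=
  ∑ i, ∑ j ∈ univ.filter (fun j => i < j), l i * l j

noncomputable def esym3 {n : ℕ} (l : Fin n → ℝ) : ℝ :=
  ∑ i, ∑ j ∈ univ.filter (fun j => i < j),
    ∑ k ∈ univ.filter (fun k => j < k), l i * l j * l k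

/-- The first Newton tensor `G(A) = S₁(A)·I − A`. -/
noncomputable def newton1 {n : ℕ} (A : Matrix (Fin n) (Fin n) ℝ) : Matrix (Fin n) (Fin n) ℝ :=
  A.trace • (1 : Matrix (Fin n) (Fin n) ℝ) - A

section Aux

open Matrix

lemma not_last_lt {n : ℕ} (j : Fin (n+1)) : ¬ (Fin.last n < j) := not_lt.2 (Fin.le_last j)

lemma esym2_castSucc (n : ℕ) (l : Fin (n+1) → ℝ) :
    esym2 l = esym2 (l ∘ Fin.castSucc) + (∑ i : Fin n, l (Fin.castSucc i)) * l (Fin.last n) := by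
  unfold esym2
  simp only [Finset.sum_filter, Fin.sum_univ_castSucc, Function.comp_apply,
    Fin.castSucc_lt_castSucc_iff, Fin.castSucc_lt_last, not_last_lt, if_true, if_false,
    lt_self_iff_false, Finset.sum_const_zero, add_zero, Finset.sum_add_distrib, Finset.sum_mul,
    ite_mul, zero_mul]

lemma esym3_castSucc (n : ℕ) (l : Fin (n+1) → ℝ) :
    esym3 l = esym3 (l ∘ Fin.castSucc) + esym2 (l ∘ Fin.castSucc) * l (Fin.last n) := by
  unfold esym3 esym2
  simp only [Finset.sum_filter, Fin.sum_univ_castSucc, Function.comp_apply,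
    Fin.castSucc_lt_castSucc_iff, Fin.castSucc_lt_last, not_last_lt, if_true, if_false,
    lt_self_iff_false, Finset.sum_const_zero, add_zero, Finset.sum_add_distrib, Finset.sum_mul,
    ite_mul, zero_mul]

lemma identities : ∀ {n : ℕ} (l : Fin n → ℝ),
    (∑ i, l i)^2 = (∑ i, (l i)^2) + 2 * esym2 l ∧
    (∑ i, l i)^3 = 6 * esym3 l + 3 * (∑ i, l i) * (∑ i, (l i)^2) - 2 * (∑ i, (l i)^3) := by
  intro n
  induction n with
  | zero => intro l; simp [esym2, esym3]
  | succ m ih =>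
    intro l
    obtain ⟨h1, h2⟩ := ih (l ∘ Fin.castSucc)
    simp only [Function.comp_apply] at h1 h2
    rw [esym2_castSucc, esym3_castSucc]
    simp only [Fin.sum_univ_castSucc, Function.comp_apply]
    constructor
    · linear_combination h1
    · linear_combination h2 + (3 * l (Fin.last m)) * h1

lemma esym3_eq_zero_of_single {n : ℕ} (i : Fin n) (l : Fin n → ℝ)
    (h : ∀ j, j ≠ i → l j = 0) : esym3 l = 0 := by
  unfold esym3
  refine Finset.sum_eq_zero fun a _ => Finset.sum_eq_zero fun b hb =>
    Finset.sum_eq_zero fun c hc => ?_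
  simp only [Finset.mem_filter] at hb hc
  by_cases hbi : b = i
  · have hai : a ≠ i := fun hh => absurd hb.2 (by rw [hh, hbi]; exact lt_irrefl i)
    rw [h a hai]; ring
  · rw [h b hbi]; ring

lemma key {n : ℕ} (hn : 3 ≤ n) (l : Fin n → ℝ) (h2 : esym2 l = 0) :
    ((∀ i, l i < ∑ j, l j) ∨ (∀ i, ∑ j, l j < l i)) ↔ esym3 l ≠ 0 := by
  obtain ⟨h1, h3⟩ := identities l
  set T := ∑ j, l j with hT
  have hQ : ∑ i, (l i)^2 = T^2 := by rw [h1, h2]; ring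
  have hne : (univ : Finset (Fin n)).Nonempty := ⟨⟨0, by omega⟩, mem_univ _⟩
  have hn3 : (3 : ℝ) ≤ (n : ℝ) := by exact_mod_cast hn
  constructor
  · rintro (h | h) he
    · have hC : ∑ i, (l i)^3 = T^3 := by rw [hQ, he] at h3; linarith
      have hTpos : 0 < T := by
        have hs : 0 < ∑ i, (T - l i) := Finset.sum_pos (fun i _ => sub_pos.2 (h i)) hne
        rw [Finset.sum_sub_distrib, Finset.sum_const, card_univ, Fintype.card_fin,
          nsmul_eq_mul, ← hT] at hs
        nlinarith
      have hsum : ∑ i, (l i)^2 * (T - l i) = 0 := by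
        have e : ∑ i, (l i)^2 * (T - l i) = T * (∑ i, (l i)^2) - ∑ i, (l i)^3 := by
          rw [Finset.mul_sum, ← Finset.sum_sub_distrib]
          exact Finset.sum_congr rfl fun i _ => by ring
        rw [e, hQ, hC]; ring
      have hall := (Finset.sum_eq_zero_iff_of_nonneg
        (fun i _ => mul_nonneg (sq_nonneg (l i)) (sub_pos.2 (h i)).le)).1 hsum
      have hl0 : ∀ i, l i = 0 := fun i => by
        rcases mul_eq_zero.1 (hall i (mem_univ i)) with hc | hc
        · exact (pow_eq_zero_iff two_ne_zero).1 hc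
        · linarith [h i]
      have : T = 0 := by rw [hT]; exact Finset.sum_eq_zero fun i _ => hl0 i
      linarith
    · have hC : ∑ i, (l i)^3 = T^3 := by rw [hQ, he] at h3; linarith
      have hTneg : T < 0 := by
        have hs : 0 < ∑ i, (l i - T) := Finset.sum_pos (fun i _ => sub_pos.2 (h i)) hne
        rw [Finset.sum_sub_distrib, Finset.sum_const, card_univ, Fintype.card_fin,
          nsmul_eq_mul, ← hT] at hs
        nlinarith
      have hsum : ∑ i, (l i)^2 * (l i - T) = 0 := by
        have e : ∑ i, (l i)^2 * (l i - T) = (∑ i, (l i)^3) - T * (∑ i, (l i)^2) := by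
          rw [Finset.mul_sum, ← Finset.sum_sub_distrib]
          exact Finset.sum_congr rfl fun i _ => by ring
        rw [e, hQ, hC]; ring
      have hall := (Finset.sum_eq_zero_iff_of_nonneg
        (fun i _ => mul_nonneg (sq_nonneg (l i)) (sub_pos.2 (h i)).le)).1 hsum
      have hl0 : ∀ i, l i = 0 := fun i => by
        rcases mul_eq_zero.1 (hall i (mem_univ i)) with hc | hc
        · exact (pow_eq_zero_iff two_ne_zero).1 hc
        · linarith [h i]
      have : T = 0 := by rw [hT]; exact Finset.sum_eq_zero fun i _ => hl0 i
      linarith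
  · intro he
    have hTne : T ≠ 0 := by
      intro h0
      apply he
      have hQ0 : ∑ i, (l i)^2 = 0 := by rw [hQ, h0]; ring
      have hl0 := (Finset.sum_eq_zero_iff_of_nonneg (fun i _ => sq_nonneg (l i))).1 hQ0
      have : ∀ i, l i = 0 := fun i => by
        have := hl0 i (mem_univ i); exact (pow_eq_zero_iff two_ne_zero).1 this
      unfold esym3
      exact Finset.sum_eq_zero fun a _ => Finset.sum_eq_zero fun b _ =>
        Finset.sum_eq_zero fun c _ => by rw [this a]; ring
    have hsq : ∀ i, (l i)^2 ≤ T^2 := fun i =>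
      hQ ▸ Finset.single_le_sum (fun j _ => sq_nonneg (l j)) (mem_univ i)
    have hnoteq : ∀ i, l i ≠ T := by
      intro i hiT
      apply he
      apply esym3_eq_zero_of_single i
      intro j hj
      have hsplit : l i ^ 2 + ∑ k ∈ univ.erase i, (l k)^2 = T^2 := by
        rw [Finset.add_sum_erase univ (fun k => (l k)^2) (mem_univ i)]; exact hQ
      have h0 : ∑ k ∈ univ.erase i, (l k)^2 = 0 := by rw [hiT] at hsplit; linarith
      have := (Finset.sum_eq_zero_iff_of_nonneg (fun k _ => sq_nonneg (l k))).1 h0 j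
        (Finset.mem_erase.2 ⟨hj, mem_univ j⟩)
      exact (pow_eq_zero_iff two_ne_zero).1 this
    rcases hTne.lt_or_gt with hneg | hpos
    · right
      intro i
      rcases (hnoteq i).lt_or_gt with hlt | hgt
      · exfalso; nlinarith [hsq i]
      · exact hgt
    · left
      intro i
      rcases (hnoteq i).lt_or_gt with hlt | hgt
      · exact hlt
      · exfalso; nlinarith [hsq i]

lemma posDef_of_conj {n : ℕ} {M : Matrix (Fin n) (Fin n) ℝ} (hM : M.PosDef)
    (B : Matrix (Fin n) (Fin n) ℝ) (hB : Function.Injective (B.mulVec)) :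
    (Bᴴ * M * B).PosDef := by
  refine Matrix.PosDef.of_dotProduct_mulVec_pos (Matrix.isHermitian_conjTranspose_mul_mul B hM.1) fun x hx => ?_
  have hBx : B *ᵥ x ≠ 0 := fun h => hx (hB (h.trans (B.mulVec_zero).symm))
  have := hM.dotProduct_mulVec_pos hBx
  simpa only [star_mulVec, Matrix.dotProduct_mulVec, Matrix.vecMul_vecMul, Matrix.mulVec_mulVec,
    Matrix.conjTranspose_conjTranspose, mul_assoc] using this

lemma unitary_mulVec_injective {n : ℕ} {U : Matrix (Fin n) (Fin n) ℝ}
    (hU : U ∈ Matrix.unitaryGroup (Fin n) ℝ) : Function.Injective (U.mulVec) := by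
  intro x y hxy
  have := congrArg (fun v => (star U) *ᵥ v) hxy
  simpa [Matrix.mulVec_mulVec, Matrix.mem_unitaryGroup_iff'.mp hU] using this

lemma posDef_conj_unitary_iff {n : ℕ} {U : Matrix (Fin n) (Fin n) ℝ}
    (hU : U ∈ Matrix.unitaryGroup (Fin n) ℝ) (M : Matrix (Fin n) (Fin n) ℝ) :
    (U * M * star U).PosDef ↔ M.PosDef := by
  have hstar : star U ∈ Matrix.unitaryGroup (Fin n) ℝ := Unitary.star_mem hU
  constructor
  · intro h
    have h2 := posDef_of_conj h U (unitary_mulVec_injective hU)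
    have : Uᴴ * (U * M * star U) * U = M := by
      rw [Matrix.star_eq_conjTranspose] at *
      have h1 : Uᴴ * U = 1 := Matrix.mem_unitaryGroup_iff'.mp hU
      calc Uᴴ * (U * M * Uᴴ) * U = (Uᴴ * U) * M * (Uᴴ * U) := by
            simp only [Matrix.mul_assoc]
        _ = M := by rw [h1, one_mul, mul_one]
    rwa [this] at h2
  · intro h
    have h2 := posDef_of_conj h Uᴴ (unitary_mulVec_injective hstar)
    rwa [Matrix.star_eq_conjTranspose]

lemma trace_eq_sum_eig {n : ℕ} (A : Matrix (Fin n) (Fin n) ℝ) (hA : A.IsHermitian) :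
    A.trace = ∑ i, hA.eigenvalues i := by
  conv_lhs => rw [hA.spectral_theorem, Unitary.conjStarAlgAut_apply]
  rw [Matrix.trace_mul_cycle, Matrix.mem_unitaryGroup_iff'.mp (hA.eigenvectorUnitary).2, one_mul,
    Matrix.trace_diagonal]
  simp [RCLike.ofReal_real_eq_id]

lemma shift_decomp {n : ℕ} (A : Matrix (Fin n) (Fin n) ℝ) (hA : A.IsHermitian) (c : ℝ) :
    c • (1 : Matrix (Fin n) (Fin n) ℝ) - A =
      (hA.eigenvectorUnitary : Matrix (Fin n) (Fin n) ℝ) *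
        Matrix.diagonal (fun i => c - hA.eigenvalues i) *
        star (hA.eigenvectorUnitary : Matrix (Fin n) (Fin n) ℝ) := by
  set U := (hA.eigenvectorUnitary : Matrix (Fin n) (Fin n) ℝ) with hUdef
  have hU1 : U * star U = 1 := Matrix.mem_unitaryGroup_iff.mp (hA.eigenvectorUnitary).2
  have hdiag : Matrix.diagonal (fun i => c - hA.eigenvalues i) =
      c • (1 : Matrix (Fin n) (Fin n) ℝ) - Matrix.diagonal (RCLike.ofReal ∘ hA.eigenvalues) := by
    rw [Matrix.smul_one_eq_diagonal, ← Matrix.diagonal_sub, RCLike.ofReal_real_eq_id,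
      Function.id_comp]
  rw [hdiag, Matrix.mul_sub, Matrix.sub_mul]
  conv_lhs => rw [hA.spectral_theorem, Unitary.conjStarAlgAut_apply]
  congr 1
  rw [Matrix.mul_smul, Matrix.smul_mul, mul_one, hU1]

lemma posDef_shift_iff {n : ℕ} (A : Matrix (Fin n) (Fin n) ℝ) (hA : A.IsHermitian) (c : ℝ) :
    (c • (1 : Matrix (Fin n) (Fin n) ℝ) - A).PosDef ↔ ∀ i, hA.eigenvalues i < c := by
  rw [shift_decomp A hA c, posDef_conj_unitary_iff (hA.eigenvectorUnitary).2,
    Matrix.posDef_diagonal_iff]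
  simp [sub_pos]

lemma posDef_shift_iff' {n : ℕ} (A : Matrix (Fin n) (Fin n) ℝ) (hA : A.IsHermitian) (c : ℝ) :
    (A - c • (1 : Matrix (Fin n) (Fin n) ℝ)).PosDef ↔ ∀ i, c < hA.eigenvalues i := by
  have hdecomp : A - c • (1 : Matrix (Fin n) (Fin n) ℝ) =
      (hA.eigenvectorUnitary : Matrix (Fin n) (Fin n) ℝ) *
        Matrix.diagonal (fun i => hA.eigenvalues i - c) *
        star (hA.eigenvectorUnitary : Matrix (Fin n) (Fin n) ℝ) := by
    have h := shift_decomp A hA c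
    have hneg : A - c • (1 : Matrix (Fin n) (Fin n) ℝ) =
        -(c • (1 : Matrix (Fin n) (Fin n) ℝ) - A) := (neg_sub _ _).symm
    rw [hneg, h]
    have : Matrix.diagonal (fun i => hA.eigenvalues i - c) =
        -Matrix.diagonal (fun i => c - hA.eigenvalues i) := by
      have hfun : (fun i => hA.eigenvalues i - c) = fun i => -(c - hA.eigenvalues i) := by
        funext i; ring
      rw [hfun, Matrix.diagonal_neg]
    rw [this, Matrix.mul_neg, Matrix.neg_mul]
  rw [hdecomp, posDef_conj_unitary_iff (hA.eigenvectorUnitary).2,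
    Matrix.posDef_diagonal_iff]
  simp [sub_pos]

end Aux

/-- For a real symmetric `n×n` matrix `A` (`n ≥ 3`) with `S₂(A) = 0`,
the Newton tensor `G(A)` is positive definite or negative definite
if and only if `S₃(A) ≠ 0`. -/
theorem newton1_definite_iff_S3_ne_zero {n : ℕ} (hn : 3 ≤ n)
    (A : Matrix (Fin n) (Fin n) ℝ) (hA : A.IsHermitian)
    (hS2 : esym2 hA.eigenvalues = 0) :
    ((newton1 A).PosDef ∨ (-(newton1 A)).PosDef) ↔ esym3 hA.eigenvalues ≠ 0 := by
  have htr : A.trace = ∑ i, hA.eigenvalues i := trace_eq_sum_eig A hA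
  have h1 : (newton1 A).PosDef ↔ ∀ i, hA.eigenvalues i < ∑ j, hA.eigenvalues j := by
    unfold newton1
    rw [htr]
    exact posDef_shift_iff A hA _
  have h2 : (-(newton1 A)).PosDef ↔ ∀ i, (∑ j, hA.eigenvalues j) < hA.eigenvalues i := by
    have hneg : -(newton1 A) = A - A.trace • (1 : Matrix (Fin n) (Fin n) ℝ) := by
      unfold newton1; rw [neg_sub]
    rw [hneg, htr]
    exact posDef_shift_iff' A hA _
  rw [h1, h2]
  exact key hn hA.eigenvalues hS2
end

section
/- Let λ₁,…,λₙ be real numbers with Σ_{i<j} λᵢλⱼ = 0 and Σ_{i<j<k} λᵢλⱼλ_k ≠ 0. Then for every index i, Σ_{j≠i} λⱼ ≠ 0; moreover all the numbers Σ_{j≠i} λⱼ (i = 1,…,n) have the same sign. -/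
open Finset

private lemma triple_zero' {n : ℕ} (l : Fin n → ℝ) (i : Fin n)
    (h : ∀ j, j ≠ i → l j = 0) :
    ∑ a, ∑ b ∈ univ.filter (fun b => a < b),
        ∑ c ∈ univ.filter (fun c => b < c), l a * l b * l c = 0 := by
  apply Finset.sum_eq_zero; intro a _
  apply Finset.sum_eq_zero; intro b hb
  apply Finset.sum_eq_zero; intro c _
  simp only [mem_filter] at hb
  by_cases ha : a = i
  · have hbi : b ≠ i := fun hbi => absurd hb.2 (by rw [hbi, ← ha]; exact lt_irrefl a)
    rw [h b hbi]; ring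
  · rw [h a ha]; ring

private lemma swap_sum' {n : ℕ} (l : Fin n → ℝ) :
    ∑ i, ∑ j ∈ univ.filter (fun j => j < i), l i * l j
      = ∑ i, ∑ j ∈ univ.filter (fun j => i < j), l i * l j := by
  simp only [Finset.sum_filter]
  rw [Finset.sum_comm]
  apply Finset.sum_congr rfl; intro i _
  apply Finset.sum_congr rfl; intro j _
  by_cases h : i < j <;> simp [h, mul_comm]

/-- Let `λ₁,…,λₙ` (`n ≥ 3`) be reals with `∑_{i<j} λᵢλⱼ = 0` and
`∑_{i<j<k} λᵢλⱼλₖ ≠ 0`. Then for every `i` the sum `∑_{j≠i} λⱼ` is nonzero,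
and all these sums have the same sign. -/
theorem newton_eigenvalues_same_sign {n : ℕ} (hn : 3 ≤ n) (l : Fin n → ℝ)
    (hS2 : ∑ i, ∑ j ∈ univ.filter (fun j => i < j), l i * l j = 0)
    (hS3 : ∑ i, ∑ j ∈ univ.filter (fun j => i < j),
        ∑ k ∈ univ.filter (fun k => j < k), l i * l j * l k ≠ 0) :
    (∀ i, ∑ j ∈ univ.erase i, l j ≠ 0) ∧
    (∀ i i', 0 < (∑ j ∈ univ.erase i, l j) * (∑ j ∈ univ.erase i', l j)) := by
  classical
  set s : ℝ := ∑ i, l i with hs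
  have split : ∀ i : Fin n, ∑ j, l i * l j
      = l i * l i + (∑ j ∈ univ.filter (fun j => i < j), l i * l j
        + ∑ j ∈ univ.filter (fun j => j < i), l i * l j) := by
    intro i
    rw [← Finset.sum_filter_add_sum_filter_not univ (fun j => i < j) (fun j => l i * l j)]
    have hset : univ.filter (fun j => ¬ i < j) = insert i (univ.filter (fun j => j < i)) := by
      ext j
      simp [not_lt, le_iff_lt_or_eq, or_comm]
    rw [hset, Finset.sum_insert (by simp)]
    ring
  have key : s * s = ∑ i, l i * l i := by
    calc s * s = ∑ i, ∑ j, l i * l j := Finset.sum_mul_sum _ _ _ _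
    _ = ∑ i, (l i * l i + (∑ j ∈ univ.filter (fun j => i < j), l i * l j
        + ∑ j ∈ univ.filter (fun j => j < i), l i * l j)) :=
      Finset.sum_congr rfl (fun i _ => split i)
    _ = (∑ i, l i * l i) + ((∑ i, ∑ j ∈ univ.filter (fun j => i < j), l i * l j)
        + (∑ i, ∑ j ∈ univ.filter (fun j => j < i), l i * l j)) := by
      rw [Finset.sum_add_distrib, Finset.sum_add_distrib]
    _ = ∑ i, l i * l i := by rw [swap_sum' l, hS2]; ring
  have hbound : ∀ i : Fin n, l i * l i ≤ s * s := by
    intro i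
    rw [key]
    exact Finset.single_le_sum (fun j _ => mul_self_nonneg (l j)) (mem_univ i)
  have hpos : ∀ i : Fin n, 0 < s * (s - l i) := by
    intro i
    rcases eq_or_ne s 0 with h0 | h0
    · exfalso
      have hall : ∀ j : Fin n, l j = 0 := by
        intro j
        have h2 : ∑ k, l k * l k = 0 := by rw [← key, h0]; ring
        have := (Finset.sum_eq_zero_iff_of_nonneg
          (fun k _ => mul_self_nonneg (l k))).mp h2 j (mem_univ j)
        nlinarith [this]
      apply hS3
      apply Finset.sum_eq_zero; intro a _
      apply Finset.sum_eq_zero; intro b _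
      apply Finset.sum_eq_zero; intro c _
      rw [hall a]; ring
    · have h1 : 0 ≤ s * (s - l i) := by nlinarith [hbound i]
      rcases h1.lt_or_eq with h | h
      · exact h
      · exfalso
        have hli : l i = s := by
          have h2 : s * (s - l i) = 0 := h.symm
          rcases mul_eq_zero.mp h2 with h3 | h3
          · exact absurd h3 h0
          · linarith
        have hz : ∀ j, j ≠ i → l j = 0 := by
          intro j hj
          have h4 : ∑ k ∈ univ.erase i, l k * l k = 0 := by
            have h5 := Finset.sum_erase_eq_sub (f := fun k => l k * l k) (mem_univ i)
            rw [h5, ← key]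
            show s * s - l i * l i = 0
            rw [hli]; ring
          have := (Finset.sum_eq_zero_iff_of_nonneg
            (fun k _ => mul_self_nonneg (l k))).mp h4 j (Finset.mem_erase.mpr ⟨hj, mem_univ j⟩)
          nlinarith [this]
        exact hS3 (triple_zero' l i hz)
  have herase : ∀ i : Fin n, ∑ j ∈ univ.erase i, l j = s - l i := by
    intro i
    exact Finset.sum_erase_eq_sub (mem_univ i)
  constructor
  · intro i hzero
    have := hpos i
    rw [herase i] at hzero
    rw [hzero] at this
    simp at this
  · intro i i'
    rw [herase i, herase i']
    have h1 := hpos i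
    have h2 := hpos i'
    have hsne : s ≠ 0 := by intro h; rw [h] at h1; simp at h1
    have hs2 : 0 < s * s := by rcases hsne.lt_or_gt with h | h <;> nlinarith
    nlinarith [mul_pos h1 h2]
end

section
/- For n = 4 and m > 0, u_m(r) = ∫_{r_m}^r √(2m/(s² − 2m)) ds satisfies u_m(r) = √(2m)·log r + a₁ + O(r^{−2}) as r → ∞, for some constant a₁, with leading coefficient a = √(2m) ≠ 0. -/
open Filter Asymptotics MeasureTheory

lemma schw_integrable_aux (b R : ℝ) (hb : 0 < b) (hR : Real.sqrt b ≤ R) :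
    IntervalIntegrable (fun s => Real.sqrt (b / (s ^ 2 - b))) volume (Real.sqrt b) R := by
  set rm := Real.sqrt b with hrm_def
  have hrm : 0 < rm := Real.sqrt_pos.2 hb
  have hrm2 : rm ^ 2 = b := Real.sq_sqrt hb.le
  set c : ℝ := Real.sqrt b / Real.sqrt (2 * rm) with hc_def
  have hc : 0 ≤ c := div_nonneg (Real.sqrt_nonneg _) (Real.sqrt_nonneg _)
  have hg : IntervalIntegrable (fun s => c * (s - rm) ^ (-(1/2) : ℝ)) volume rm R := by
    have h0 : IntervalIntegrable (fun x : ℝ => x ^ (-(1/2) : ℝ)) volume 0 (R - rm) :=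
      intervalIntegral.intervalIntegrable_rpow' (by norm_num)
    have h1 := h0.comp_sub_right rm
    simp only [zero_add, sub_add_cancel] at h1
    exact h1.const_mul c
  refine hg.mono_fun ?_ ?_
  · apply Measurable.aestronglyMeasurable
    fun_prop
  · rw [Filter.EventuallyLE, MeasureTheory.ae_restrict_iff' measurableSet_uIoc]
    refine Filter.Eventually.of_forall fun s hs => ?_
    rw [Set.uIoc_of_le hR] at hs
    obtain ⟨hs1, hs2⟩ := hs
    have hsub : 0 < s - rm := by linarith
    have hpos : 0 < s ^ 2 - b := by nlinarith
    have key : Real.sqrt (b / (s ^ 2 - b)) ≤ c * (s - rm) ^ (-(1/2) : ℝ) := by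
      rw [Real.sqrt_div hb.le]
      have h2 : (s - rm) ^ (-(1/2) : ℝ) = (Real.sqrt (s - rm))⁻¹ := by
        rw [Real.rpow_neg hsub.le, Real.sqrt_eq_rpow]
      have hA : Real.sqrt b / Real.sqrt (2 * rm) * (Real.sqrt (s - rm))⁻¹
          = Real.sqrt b / (Real.sqrt (2 * rm) * Real.sqrt (s - rm)) := by
        field_simp
      rw [h2, hc_def, hA]
      apply div_le_div_of_nonneg_left (Real.sqrt_nonneg b) ?_ ?_
      · positivity
      · rw [← Real.sqrt_mul (by positivity)]
        apply Real.sqrt_le_sqrt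
        nlinarith
    have h3 : 0 ≤ (s - rm) ^ (-(1/2) : ℝ) := Real.rpow_nonneg hsub.le _
    simp only [Real.norm_eq_abs, abs_of_nonneg (Real.sqrt_nonneg _),
      abs_of_nonneg (mul_nonneg hc h3)]
    exact key

lemma schw_hasDerivAt_aux (b s : ℝ) (hb : 0 < b) (hs : Real.sqrt b < s) :
    HasDerivAt (fun t => Real.sqrt b * Real.log (t + Real.sqrt (t ^ 2 - b)))
      (Real.sqrt (b / (s ^ 2 - b))) s := by
  have hrm : 0 < Real.sqrt b := Real.sqrt_pos.2 hb
  have hs0 : 0 < s := lt_trans hrm hs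
  have hpos : 0 < s ^ 2 - b := by nlinarith [Real.sq_sqrt hb.le]
  set w := Real.sqrt (s ^ 2 - b) with hw_def
  have hw : 0 < w := Real.sqrt_pos.2 hpos
  have hw2 : w ^ 2 = s ^ 2 - b := Real.sq_sqrt hpos.le
  have hsw : 0 < s + w := by linarith
  have hder_w : HasDerivAt (fun t : ℝ => Real.sqrt (t ^ 2 - b)) (s / w) s := by
    have h1 : HasDerivAt (fun t : ℝ => t ^ 2 - b) (2 * s) s := by
      simpa using ((hasDerivAt_pow 2 s).sub_const b)
    have h2 := (Real.hasDerivAt_sqrt (ne_of_gt hpos)).comp s h1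
    refine h2.congr_deriv ?_
    field_simp
    ring
  have hder_in : HasDerivAt (fun t : ℝ => t + Real.sqrt (t ^ 2 - b)) (1 + s / w) s :=
    (hasDerivAt_id s).add hder_w
  have hder_log := (hder_in.log (ne_of_gt hsw)).const_mul (Real.sqrt b)
  refine hder_log.congr_deriv ?_
  rw [Real.sqrt_div hb.le, ← hw_def]
  field_simp
  ring

/-- For `n = 4` and `m > 0`, with `r_m = √(2m)`, the Schwarzschild profile
`u_m(r) = ∫_{r_m}^r √(2m/(s² − 2m)) ds` satisfies
`u_m(r) = √(2m)·log r + a₁ + O(r^{−2})` as `r → ∞`, for some constant `a₁`,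
with leading coefficient `a = √(2m) ≠ 0`. -/
theorem schwarzschild_profile_four (m : ℝ) (hm : 0 < m) :
    let rm : ℝ := Real.sqrt (2 * m)
    let u : ℝ → ℝ := fun r => ∫ s in rm..r, Real.sqrt (2 * m / (s ^ 2 - 2 * m))
    Real.sqrt (2 * m) ≠ 0 ∧
    ∃ a₁ : ℝ,
      (fun r : ℝ => u r - (Real.sqrt (2 * m) * Real.log r + a₁)) =O[atTop]
        (fun r : ℝ => r ^ (-(2 : ℝ))) := by
  intro rm u
  have hb : (0:ℝ) < 2 * m := by linarith
  have hrm : 0 < rm := Real.sqrt_pos.2 hb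
  have hrm2 : rm ^ 2 = 2 * m := Real.sq_sqrt hb.le
  refine ⟨ne_of_gt hrm, ?_⟩
  set b : ℝ := 2 * m with hb_def
  set R : ℝ := 2 * rm with hR_def
  set f : ℝ → ℝ := fun s => Real.sqrt (b / (s ^ 2 - b)) with hf_def
  set F : ℝ → ℝ := fun s => Real.sqrt b * Real.log (s + Real.sqrt (s ^ 2 - b)) with hF_def
  have hRrm : rm < R := by linarith
  -- continuity of f on [R, r]
  have hcont : ∀ r : ℝ, R ≤ r → ContinuousOn f (Set.uIcc R r) := by
    intro r hr
    rw [Set.uIcc_of_le hr]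
    apply ContinuousOn.sqrt
    apply ContinuousOn.div continuousOn_const (by fun_prop)
    intro s hs
    have h1 : R ≤ s := hs.1
    have : 0 < s ^ 2 - b := by nlinarith
    exact ne_of_gt this
  have key : ∀ r : ℝ, R ≤ r → u r = u R + (F r - F R) := by
    intro r hr
    have h1 : IntervalIntegrable f volume rm R := schw_integrable_aux b R hb hRrm.le
    have h2 : IntervalIntegrable f volume R r := (hcont r hr).intervalIntegrable
    have h3 : ∫ s in R..r, f s = F r - F R := by
      apply intervalIntegral.integral_eq_sub_of_hasDerivAt _ h2
      intro x hx
      rw [Set.uIcc_of_le hr] at hx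
      exact schw_hasDerivAt_aux b x hb (lt_of_lt_of_le hRrm hx.1)
    have h4 : u R + ∫ s in R..r, f s = u r :=
      intervalIntegral.integral_add_adjacent_intervals h1 h2
    rw [← h4, h3]
  refine ⟨u R - F R + Real.sqrt b * Real.log 2, ?_⟩
  clear_value u F f R b rm
  rw [Asymptotics.isBigO_iff]
  refine ⟨Real.sqrt b * b, ?_⟩
  filter_upwards [Filter.eventually_ge_atTop R] with r hr
  have hr0 : 0 < r := lt_of_lt_of_le (lt_trans hrm hRrm) hr
  have hr2 : 0 ≤ r ^ 2 - b := by nlinarith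
  set w := Real.sqrt (r ^ 2 - b) with hw_def
  have hw0 : 0 ≤ w := Real.sqrt_nonneg _
  have hw2 : w ^ 2 = r ^ 2 - b := Real.sq_sqrt hr2
  have hwr : w ≤ r := by nlinarith [Real.sq_sqrt hr2, Real.sqrt_nonneg (r ^ 2 - b)]
  have hrw : 0 < r + w := by linarith
  -- rewrite the difference
  have heq : u r - (Real.sqrt b * Real.log r + (u R - F R + Real.sqrt b * Real.log 2))
      = Real.sqrt b * (Real.log (r + w) - Real.log (2 * r)) := by
    rw [key r hr]
    have : Real.log (2 * r) = Real.log 2 + Real.log r :=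
      Real.log_mul (by norm_num) (ne_of_gt hr0)
    simp only [hF_def, ← hw_def]
    rw [this]
    ring
  rw [heq]
  -- bound the log difference
  have hle : Real.log (r + w) ≤ Real.log (2 * r) :=
    Real.log_le_log hrw (by linarith)
  have hdiff : Real.log (2 * r) - Real.log (r + w) ≤ b / r ^ 2 := by
    have h1 : Real.log (2 * r) - Real.log (r + w) = Real.log (2 * r / (r + w)) :=
      (Real.log_div (by positivity) (ne_of_gt hrw)).symm
    have h2 : Real.log (2 * r / (r + w)) ≤ 2 * r / (r + w) - 1 :=
      Real.log_le_sub_one_of_pos (by positivity)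
    have h3 : 2 * r / (r + w) - 1 = (r - w) / (r + w) := by
      field_simp
      ring
    have h4 : (r - w) * (r + w) = b := by nlinarith
    have h5 : r - w = b / (r + w) := by
      field_simp
      nlinarith
    have h6 : (r - w) / (r + w) ≤ b / r ^ 2 := by
      rw [h5, div_div]
      apply div_le_div_of_nonneg_left hb.le (by positivity)
      nlinarith
    linarith
  have hrpow : ‖r ^ (-(2:ℝ))‖ = (r ^ 2)⁻¹ := by
    rw [Real.norm_eq_abs, abs_of_nonneg (Real.rpow_nonneg hr0.le _),
      Real.rpow_neg hr0.le, Real.rpow_two]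
  rw [hrpow, Real.norm_eq_abs, abs_mul, abs_of_nonneg (Real.sqrt_nonneg b),
    abs_of_nonpos (by linarith), neg_sub]
  calc Real.sqrt b * (Real.log (2 * r) - Real.log (r + w))
      ≤ Real.sqrt b * (b / r ^ 2) := by
        apply mul_le_mul_of_nonneg_left hdiff (Real.sqrt_nonneg b)
    _ = Real.sqrt b * b * (r ^ 2)⁻¹ := by rw [div_eq_mul_inv]; ring
end
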